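/- (CDF, Case 1.) Suppose θ₁+θ₂ ≠ θ₁′ and θ₁+θ₂ ≠ θ₂′. Then for the joint CDF F(y₁,y₂) = ∫_a^{y₁} ∫_a^{y₂} f(u,v) dv du of the DPRH model: if a < y₁ < y₂ < b then F(y₁,y₂) = F₀(y₁)^{θ₁+θ₂} + (θ₂ F₀(y₁)^{θ₁′}/(θ₁+θ₂−θ₁′))·[F₀(y₂)^{θ₁+θ₂−θ₁′} − F₀(y₁)^{θ₁+θ₂−θ₁′}], and if a < y₂ < y₁ < b then F(y₁,y₂) = F₀(y₂)^{θ₁+θ₂} + (θ₁ F₀(y₂)^{θ₂′}/(θ₁+θ₂−θ₂′))·[F₀(y₁)^{θ₁+θ₂−θ₂′} − F₀(y₂)^{θ₁+θ₂−θ₂′}]. -/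

import Mathlib

open MeasureTheory Set intervalIntegral

noncomputable def dprh (a b : ℝ) (F₀ f₀ : ℝ → ℝ) (θ₁ θ₂ θ₁' θ₂' : ℝ) (y₁ y₂ : ℝ) : ℝ :=
  if a < y₁ ∧ y₁ < y₂ ∧ y₂ < b then
    θ₁' * θ₂ * f₀ y₁ * f₀ y₂ * F₀ y₁ ^ (θ₁' - 1) * F₀ y₂ ^ (θ₁ + θ₂ - θ₁' - 1)
  else if a < y₂ ∧ y₂ < y₁ ∧ y₁ < b then
    θ₁ * θ₂' * f₀ y₁ * f₀ y₂ * F₀ y₁ ^ (θ₁ + θ₂ - θ₂' - 1) * F₀ y₂ ^ (θ₂' - 1)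
  else 0

lemma ae_ne_pt (u : ℝ) : ∀ᵐ v : ℝ, v ≠ u := by
  refine MeasureTheory.ae_iff.2 ?_
  simpa using measure_singleton u

section
variable {a b : ℝ} {F₀ f₀ : ℝ → ℝ} {θ₁ θ₂ θ₁' θ₂' : ℝ}

lemma contOn     (hderiv : ∀ y ∈ Ioo a b, HasDerivAt F₀ (f₀ y) y)
    (hf₀cont : ContinuousOn f₀ (Ioo a b))
    (hF₀pos : ∀ y ∈ Ioo a b, 0 < F₀ y) (q : ℝ) :
    ContinuousOn (fun v => f₀ v * F₀ v ^ q) (Ioo a b) := by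
  refine hf₀cont.mul (ContinuousOn.rpow_const ?_ fun x hx => Or.inl (hF₀pos x hx).ne')
  exact fun x hx => ((hderiv x hx).continuousAt).continuousWithinAt

lemma helperA     (hderiv : ∀ y ∈ Ioo a b, HasDerivAt F₀ (f₀ y) y)
    (hf₀cont : ContinuousOn f₀ (Ioo a b))
    (hF₀pos : ∀ y ∈ Ioo a b, 0 < F₀ y)
    (p : ℝ) (hp : p ≠ 0) (s t : ℝ) (hs : s ∈ Ioo a b) (ht : t ∈ Ioo a b) :
    IntervalIntegrable (fun v => f₀ v * F₀ v ^ (p - 1)) volume s t ∧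
      ∫ v in s..t, f₀ v * F₀ v ^ (p - 1) = F₀ t ^ p / p - F₀ s ^ p / p := by
  have hsub : uIcc s t ⊆ Ioo a b := Set.ordConnected_Ioo.uIcc_subset hs ht
  have hd : ∀ x ∈ uIcc s t, HasDerivAt (fun v => F₀ v ^ p / p) (f₀ x * F₀ x ^ (p - 1)) x := by
    intro x hx
    have hxab := hsub hx
    have h1 : HasDerivAt (fun v => F₀ v ^ p / p) (f₀ x * p * F₀ x ^ (p - 1) / p) x :=
      ((hderiv x hxab).rpow_const (Or.inl (hF₀pos x hxab).ne')).div_const p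
    have h2 : f₀ x * p * F₀ x ^ (p - 1) / p = f₀ x * F₀ x ^ (p - 1) := by field_simp
    rwa [h2] at h1
  have hint : IntervalIntegrable (fun v => f₀ v * F₀ v ^ (p - 1)) volume s t :=
    ((contOn hderiv hf₀cont hF₀pos (p - 1)).mono hsub).intervalIntegrable
  exact ⟨hint, integral_eq_sub_of_hasDerivAt hd hint⟩

lemma helperB     (hderiv : ∀ y ∈ Ioo a b, HasDerivAt F₀ (f₀ y) y)
    (hf₀pos : ∀ y ∈ Ioo a b, 0 < f₀ y)
    (hF₀pos : ∀ y ∈ Ioo a b, 0 < F₀ y)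
    (hFa : Filter.Tendsto F₀ (nhdsWithin a (Ioi a)) (nhds 0))
    (p : ℝ) (hp : 0 < p) (t : ℝ) (ht : t ∈ Ioo a b) :
    IntegrableOn (fun v => f₀ v * F₀ v ^ (p - 1)) (Ioc a t) ∧
      ∫ v in a..t, f₀ v * F₀ v ^ (p - 1) = F₀ t ^ p / p := by
  set g : ℝ → ℝ := fun v => if a < v then F₀ v ^ p / p else 0 with hg
  have hga : g a = 0 := by simp [hg]
  have hsub : Ioo a t ⊆ Ioo a b := Ioo_subset_Ioo le_rfl ht.2.le
  have hgd : ∀ x ∈ Ioo a t, HasDerivAt g (f₀ x * F₀ x ^ (p - 1)) x := by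
    intro x hx
    have hxab := hsub hx
    have h1 : HasDerivAt (fun v => F₀ v ^ p / p) (f₀ x * p * F₀ x ^ (p - 1) / p) x :=
      ((hderiv x hxab).rpow_const (Or.inl (hF₀pos x hxab).ne')).div_const p
    have h2 : f₀ x * p * F₀ x ^ (p - 1) / p = f₀ x * F₀ x ^ (p - 1) := by
      field_simp
    rw [h2] at h1
    refine h1.congr_of_eventuallyEq ?_
    filter_upwards [isOpen_Ioi.mem_nhds (show x ∈ Ioi a from hx.1)] with y hy
    simp [hg, show a < y from hy]
  have hcont : ContinuousOn g (Icc a t) := by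
    intro x hx
    rcases eq_or_lt_of_le hx.1 with h | hax
    · subst h
      have h0 : Filter.Tendsto (fun v => F₀ v ^ p / p) (nhdsWithin a (Ioi a)) (nhds 0) := by
        have := (Real.continuousAt_rpow_const 0 p (Or.inr hp.le)).tendsto.comp hFa
        simpa [Real.zero_rpow hp.ne'] using this.div_const p
      have h0' : Filter.Tendsto g (nhdsWithin a (Ioi a)) (nhds 0) := by
        refine h0.congr' ?_
        filter_upwards [self_mem_nhdsWithin] with y hy
        simp [hg, show a < y from hy]
      have h2 : Filter.Tendsto g (nhdsWithin a (insert a (Ioi a))) (nhds 0) := by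
        rw [nhdsWithin_insert]
        refine Filter.Tendsto.sup ?_ h0'
        simpa [hga] using (tendsto_pure_nhds g a)
      have h3 : Filter.Tendsto g (nhdsWithin a (Icc a t)) (nhds 0) :=
        h2.mono_left (nhdsWithin_mono _ (by rw [Set.Ioi_insert]; exact Icc_subset_Ici_self))
      unfold ContinuousWithinAt
      rwa [hga]
    · have hxab : x ∈ Ioo a b := ⟨hax, lt_of_le_of_lt hx.2 ht.2⟩
      have h1 : ContinuousAt (fun v => F₀ v ^ p / p) x :=
        (((hderiv x hxab).continuousAt).rpow_const (Or.inl (hF₀pos x hxab).ne')).div_const p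
      refine ContinuousAt.continuousWithinAt (h1.congr ?_)
      filter_upwards [isOpen_Ioi.mem_nhds (show x ∈ Ioi a from hax)] with y hy
      simp [hg, show a < y from hy]
  have hnn : ∀ x ∈ Ioo a t, 0 ≤ f₀ x * F₀ x ^ (p - 1) := fun x hx =>
    mul_nonneg (hf₀pos x (hsub hx)).le (Real.rpow_nonneg (hF₀pos x (hsub hx)).le _)
  have hint : IntegrableOn (fun v => f₀ v * F₀ v ^ (p - 1)) (Ioc a t) :=
    integrableOn_deriv_of_nonneg hcont hgd hnn
  refine ⟨hint, ?_⟩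
  rw [integral_eq_sub_of_hasDeriv_right_of_le ht.1.le hcont
      (fun x hx => (hgd x hx).hasDerivWithinAt)
      ((intervalIntegrable_iff_integrableOn_Ioc_of_le ht.1.le).2 hint)]
  simp [hg, ht.1]

-- inner integral, case w ≤ u
lemma inner_ge (hderiv : ∀ y ∈ Ioo a b, HasDerivAt F₀ (f₀ y) y)
    (hf₀pos : ∀ y ∈ Ioo a b, 0 < f₀ y)
    (hF₀pos : ∀ y ∈ Ioo a b, 0 < F₀ y)
    (hFa : Filter.Tendsto F₀ (nhdsWithin a (Ioi a)) (nhds 0))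
    (hθ₂' : 0 < θ₂')
    (u w : ℝ) (hu : u ∈ Ioo a b) (hw : w ∈ Ioo a b) (hwu : w ≤ u) :
    (IntegrableOn (fun v => dprh a b F₀ f₀ θ₁ θ₂ θ₁' θ₂' u v) (Ioc a w)) ∧
    ∫ v in a..w, dprh a b F₀ f₀ θ₁ θ₂ θ₁' θ₂' u v
      = θ₁ * θ₂' * f₀ u * F₀ u ^ (θ₁ + θ₂ - θ₂' - 1) * (F₀ w ^ θ₂' / θ₂') := by
  set C : ℝ := θ₁ * θ₂' * f₀ u * F₀ u ^ (θ₁ + θ₂ - θ₂' - 1) with hC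
  have hae : ∀ᵐ v : ℝ, v ∈ Ioc a w → dprh a b F₀ f₀ θ₁ θ₂ θ₁' θ₂' u v
      = C * (f₀ v * F₀ v ^ (θ₂' - 1)) := by
    filter_upwards [ae_ne_pt u] with v hv hvm
    have h2 : v < u := lt_of_le_of_ne (hvm.2.trans hwu) hv
    rw [dprh, if_neg (fun h => absurd h.2.1 h2.asymm), if_pos ⟨hvm.1, h2, hu.2⟩, hC]
    ring
  have hBint : IntegrableOn (fun v => C * (f₀ v * F₀ v ^ (θ₂' - 1))) (Ioc a w) :=
    ((helperB hderiv hf₀pos hF₀pos hFa θ₂' hθ₂' w hw).1).const_mul _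
  have heq : (fun v => dprh a b F₀ f₀ θ₁ θ₂ θ₁' θ₂' u v)
      =ᵐ[volume.restrict (Ioc a w)] (fun v => C * (f₀ v * F₀ v ^ (θ₂' - 1))) :=
    (ae_restrict_iff' measurableSet_Ioc).2 hae
  refine ⟨hBint.congr heq.symm, ?_⟩
  calc ∫ v in a..w, dprh a b F₀ f₀ θ₁ θ₂ θ₁' θ₂' u v
      = ∫ v in a..w, C * (f₀ v * F₀ v ^ (θ₂' - 1)) := by
        refine intervalIntegral.integral_congr_ae ?_
        simpa [Set.uIoc_of_le hw.1.le] using hae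
    _ = C * ∫ v in a..w, f₀ v * F₀ v ^ (θ₂' - 1) := intervalIntegral.integral_const_mul _ _
    _ = C * (F₀ w ^ θ₂' / θ₂') := by
        rw [(helperB hderiv hf₀pos hF₀pos hFa θ₂' hθ₂' w hw).2]

-- inner integral, case u ≤ w
lemma inner_le (hderiv : ∀ y ∈ Ioo a b, HasDerivAt F₀ (f₀ y) y)
    (hf₀cont : ContinuousOn f₀ (Ioo a b))
    (hf₀pos : ∀ y ∈ Ioo a b, 0 < f₀ y)
    (hF₀pos : ∀ y ∈ Ioo a b, 0 < F₀ y)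
    (hFa : Filter.Tendsto F₀ (nhdsWithin a (Ioi a)) (nhds 0))
    (hθ₂' : 0 < θ₂') (hθ₂'' : θ₂' ≠ 0) (hc : θ₁ + θ₂ - θ₁' ≠ 0)
    (u w : ℝ) (hu : u ∈ Ioo a b) (hw : w ∈ Ioo a b) (huw : u ≤ w) :
    ∫ v in a..w, dprh a b F₀ f₀ θ₁ θ₂ θ₁' θ₂' u v
      = (θ₁ - θ₁' * θ₂ / (θ₁ + θ₂ - θ₁')) * (f₀ u * F₀ u ^ (θ₁ + θ₂ - 1))
        + (θ₁' * θ₂ * F₀ w ^ (θ₁ + θ₂ - θ₁') / (θ₁ + θ₂ - θ₁')) * (f₀ u * F₀ u ^ (θ₁' - 1)) := by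
  set c : ℝ := θ₁ + θ₂ - θ₁' with hcdef
  set A : ℝ := θ₁' * θ₂ * f₀ u * F₀ u ^ (θ₁' - 1) with hA
  -- second piece u..w
  have haeA : ∀ᵐ v : ℝ, v ∈ Set.uIoc u w → dprh a b F₀ f₀ θ₁ θ₂ θ₁' θ₂' u v
      = A * (f₀ v * F₀ v ^ (c - 1)) := by
    refine Filter.Eventually.of_forall ?_
    intro v hvm
    rw [Set.uIoc_of_le huw] at hvm
    rw [dprh, if_pos ⟨hu.1, hvm.1, lt_of_le_of_lt hvm.2 hw.2⟩, hA, hcdef]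
    ring
  have hAA := helperA hderiv hf₀cont hF₀pos c hc u w hu hw
  have II₂ : IntervalIntegrable (fun v => dprh a b F₀ f₀ θ₁ θ₂ θ₁' θ₂' u v) volume u w := by
    refine ((hAA.1.const_mul A).congr_ae ?_)
    refine Filter.EventuallyEq.symm ((ae_restrict_iff' (measurableSet_uIoc : MeasurableSet (Set.uIoc u w))).2 ?_)
    exact haeA
  have E₂ : ∫ v in u..w, dprh a b F₀ f₀ θ₁ θ₂ θ₁' θ₂' u v
      = A * (F₀ w ^ c / c - F₀ u ^ c / c) := by
    calc ∫ v in u..w, dprh a b F₀ f₀ θ₁ θ₂ θ₁' θ₂' u v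
        = ∫ v in u..w, A * (f₀ v * F₀ v ^ (c - 1)) := intervalIntegral.integral_congr_ae haeA
      _ = A * ∫ v in u..w, f₀ v * F₀ v ^ (c - 1) := intervalIntegral.integral_const_mul _ _
      _ = A * (F₀ w ^ c / c - F₀ u ^ c / c) := by rw [hAA.2]
  -- first piece a..u, via inner_ge with w := u
  have hge := inner_ge (θ₁ := θ₁) (θ₂ := θ₂) (θ₁' := θ₁') hderiv hf₀pos hF₀pos hFa hθ₂' u u hu hu le_rfl
  have II₁ : IntervalIntegrable (fun v => dprh a b F₀ f₀ θ₁ θ₂ θ₁' θ₂' u v) volume a u :=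
    (intervalIntegrable_iff_integrableOn_Ioc_of_le hu.1.le).2 hge.1
  rw [← intervalIntegral.integral_add_adjacent_intervals II₁ II₂, hge.2, E₂]
  -- algebra
  have hx : (0:ℝ) < F₀ u := hF₀pos u hu
  have e5 : F₀ u ^ (θ₁ + θ₂ - θ₂' - 1)
      = F₀ u ^ (θ₁' - 1) * F₀ u ^ c / F₀ u ^ θ₂' := by
    rw [← Real.rpow_add hx, ← Real.rpow_sub hx]
    congr 1
    rw [hcdef]; ring
  have e6 : F₀ u ^ (θ₁ + θ₂ - 1) = F₀ u ^ (θ₁' - 1) * F₀ u ^ c := by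
    rw [← Real.rpow_add hx]
    congr 1
    rw [hcdef]; ring
  have hP2 : F₀ u ^ θ₂' ≠ 0 := (Real.rpow_pos_of_pos hx _).ne'
  rw [e5, e6, hA]
  field_simp
  ring

-- outer integral for z ≤ w
lemma outerL1 (hderiv : ∀ y ∈ Ioo a b, HasDerivAt F₀ (f₀ y) y)
    (hf₀cont : ContinuousOn f₀ (Ioo a b))
    (hf₀pos : ∀ y ∈ Ioo a b, 0 < f₀ y)
    (hF₀pos : ∀ y ∈ Ioo a b, 0 < F₀ y)
    (hFa : Filter.Tendsto F₀ (nhdsWithin a (Ioi a)) (nhds 0))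
    (hθ₁ : 0 < θ₁) (hθ₂ : 0 < θ₂) (hθ₁' : 0 < θ₁') (hθ₂' : 0 < θ₂')
    (hc : θ₁ + θ₂ - θ₁' ≠ 0)
    (z w : ℝ) (hz : z ∈ Ioo a b) (hw : w ∈ Ioo a b) (hzw : z ≤ w) :
    (IntegrableOn (fun u => ∫ v in a..w, dprh a b F₀ f₀ θ₁ θ₂ θ₁' θ₂' u v) (Ioc a z)) ∧
    ∫ u in a..z, ∫ v in a..w, dprh a b F₀ f₀ θ₁ θ₂ θ₁' θ₂' u v
      = F₀ z ^ (θ₁ + θ₂) + θ₂ * F₀ z ^ θ₁' / (θ₁ + θ₂ - θ₁') *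
          (F₀ w ^ (θ₁ + θ₂ - θ₁') - F₀ z ^ (θ₁ + θ₂ - θ₁')) := by
  have hs : (0:ℝ) < θ₁ + θ₂ := add_pos hθ₁ hθ₂
  set c : ℝ := θ₁ + θ₂ - θ₁' with hcdef
  set C₁ : ℝ := θ₁ - θ₁' * θ₂ / c with hC₁
  set C₂ : ℝ := θ₁' * θ₂ * F₀ w ^ c / c with hC₂
  set G : ℝ → ℝ := fun u => C₁ * (f₀ u * F₀ u ^ (θ₁ + θ₂ - 1))
    + C₂ * (f₀ u * F₀ u ^ (θ₁' - 1)) with hG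
  have hae : ∀ᵐ u : ℝ, u ∈ Ioc a z →
      (∫ v in a..w, dprh a b F₀ f₀ θ₁ θ₂ θ₁' θ₂' u v) = G u := by
    refine Filter.Eventually.of_forall ?_
    intro u hum
    have hu : u ∈ Ioo a b := ⟨hum.1, lt_of_le_of_lt hum.2 hz.2⟩
    rw [inner_le hderiv hf₀cont hf₀pos hF₀pos hFa hθ₂' hθ₂'.ne' hc u w hu hw
      (hum.2.trans hzw), hG]
  have hB1 := helperB hderiv hf₀pos hF₀pos hFa (θ₁ + θ₂) hs z hz
  have hB2 := helperB hderiv hf₀pos hF₀pos hFa θ₁' hθ₁' z hz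
  have hGint : IntegrableOn G (Ioc a z) := (hB1.1.const_mul C₁).add (hB2.1.const_mul C₂)
  have heq : (fun u => ∫ v in a..w, dprh a b F₀ f₀ θ₁ θ₂ θ₁' θ₂' u v)
      =ᵐ[volume.restrict (Ioc a z)] G := (ae_restrict_iff' measurableSet_Ioc).2 hae
  refine ⟨hGint.congr heq.symm, ?_⟩
  have hval : ∫ u in a..z, G u
      = C₁ * (F₀ z ^ (θ₁ + θ₂) / (θ₁ + θ₂)) + C₂ * (F₀ z ^ θ₁' / θ₁') := by
    rw [hG, intervalIntegral.integral_add
        (((intervalIntegrable_iff_integrableOn_Ioc_of_le hz.1.le).2 (hB1.1)).const_mul C₁)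
        (((intervalIntegrable_iff_integrableOn_Ioc_of_le hz.1.le).2 (hB2.1)).const_mul C₂),
      intervalIntegral.integral_const_mul, intervalIntegral.integral_const_mul, hB1.2, hB2.2]
  calc ∫ u in a..z, ∫ v in a..w, dprh a b F₀ f₀ θ₁ θ₂ θ₁' θ₂' u v
      = ∫ u in a..z, G u := by
        refine intervalIntegral.integral_congr_ae ?_
        simpa [Set.uIoc_of_le hz.1.le] using hae
    _ = C₁ * (F₀ z ^ (θ₁ + θ₂) / (θ₁ + θ₂)) + C₂ * (F₀ z ^ θ₁' / θ₁') := hval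
    _ = F₀ z ^ (θ₁ + θ₂) + θ₂ * F₀ z ^ θ₁' / c * (F₀ w ^ c - F₀ z ^ c) := by
        have hx : (0:ℝ) < F₀ z := hF₀pos z hz
        have e : F₀ z ^ (θ₁ + θ₂) = F₀ z ^ θ₁' * F₀ z ^ c := by
          rw [← Real.rpow_add hx]
          congr 1
          rw [hcdef]; ring
        rw [e, hC₁, hC₂, hcdef]
        have hc' : θ₁ + θ₂ - θ₁' ≠ 0 := hc
        field_simp
        ring
end

theorem dprh_cdf_case1
    (a b : ℝ) (hab : a < b) (F₀ f₀ : ℝ → ℝ)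
    (hderiv : ∀ y ∈ Ioo a b, HasDerivAt F₀ (f₀ y) y)
    (hf₀cont : ContinuousOn f₀ (Ioo a b))
    (hmono : StrictMonoOn F₀ (Ioo a b))
    (hf₀pos : ∀ y ∈ Ioo a b, 0 < f₀ y)
    (hF₀pos : ∀ y ∈ Ioo a b, 0 < F₀ y)
    (hF₀lt1 : ∀ y ∈ Ioo a b, F₀ y < 1)
    (hFa : Filter.Tendsto F₀ (nhdsWithin a (Ioi a)) (nhds 0))
    (hFb : Filter.Tendsto F₀ (nhdsWithin b (Iio b)) (nhds 1))
    (θ₁ θ₂ θ₁' θ₂' : ℝ) (hθ₁ : 0 < θ₁) (hθ₂ : 0 < θ₂) (hθ₁' : 0 < θ₁') (hθ₂' : 0 < θ₂')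
    (hne₁ : θ₁ + θ₂ ≠ θ₁') (hne₂ : θ₁ + θ₂ ≠ θ₂') (y₁ y₂ : ℝ)
    :
    (a < y₁ → y₁ < y₂ → y₂ < b →
      (∫ u in a..y₁, ∫ v in a..y₂, dprh a b F₀ f₀ θ₁ θ₂ θ₁' θ₂' u v) =
        F₀ y₁ ^ (θ₁ + θ₂) + θ₂ * F₀ y₁ ^ θ₁' / (θ₁ + θ₂ - θ₁') *
          (F₀ y₂ ^ (θ₁ + θ₂ - θ₁') - F₀ y₁ ^ (θ₁ + θ₂ - θ₁'))) ∧
    (a < y₂ → y₂ < y₁ → y₁ < b →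
      (∫ u in a..y₁, ∫ v in a..y₂, dprh a b F₀ f₀ θ₁ θ₂ θ₁' θ₂' u v) =
        F₀ y₂ ^ (θ₁ + θ₂) + θ₁ * F₀ y₂ ^ θ₂' / (θ₁ + θ₂ - θ₂') *
          (F₀ y₁ ^ (θ₁ + θ₂ - θ₂') - F₀ y₂ ^ (θ₁ + θ₂ - θ₂'))) := by
  have hc : θ₁ + θ₂ - θ₁' ≠ 0 := sub_ne_zero_of_ne hne₁
  have hd : θ₁ + θ₂ - θ₂' ≠ 0 := sub_ne_zero_of_ne hne₂
  constructor
  · intro h1 h2 h3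
    exact (outerL1 hderiv hf₀cont hf₀pos hF₀pos hFa hθ₁ hθ₂ hθ₁' hθ₂' hc y₁ y₂
      ⟨h1, h2.trans h3⟩ ⟨h1.trans h2, h3⟩ h2.le).2
  · intro h1 h2 h3
    have hy2 : y₂ ∈ Ioo a b := ⟨h1, h2.trans h3⟩
    have hy1 : y₁ ∈ Ioo a b := ⟨h1.trans h2, h3⟩
    have hL := outerL1 hderiv hf₀cont hf₀pos hF₀pos hFa hθ₁ hθ₂ hθ₁' hθ₂' hc y₂ y₂
      hy2 hy2 le_rfl
    set H : ℝ → ℝ := fun u => (θ₁ * F₀ y₂ ^ θ₂') * (f₀ u * F₀ u ^ (θ₁ + θ₂ - θ₂' - 1))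
      with hH
    have haeH : ∀ᵐ u : ℝ, u ∈ Set.uIoc y₂ y₁ →
        (∫ v in a..y₂, dprh a b F₀ f₀ θ₁ θ₂ θ₁' θ₂' u v) = H u := by
      refine Filter.Eventually.of_forall ?_
      intro u hum
      rw [Set.uIoc_of_le h2.le] at hum
      have hu : u ∈ Ioo a b := ⟨h1.trans hum.1, lt_of_le_of_lt hum.2 h3⟩
      rw [(inner_ge hderiv hf₀pos hF₀pos hFa hθ₂' u y₂ hu hy2 hum.1.le).2, hH]
      field_simp
    have hHA := helperA hderiv hf₀cont hF₀pos (θ₁ + θ₂ - θ₂') hd y₂ y₁ hy2 hy1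
    have heqb : (fun u => ∫ v in a..y₂, dprh a b F₀ f₀ θ₁ θ₂ θ₁' θ₂' u v)
        =ᵐ[volume.restrict (Set.uIoc y₂ y₁)] H :=
      (ae_restrict_iff' measurableSet_uIoc).2 haeH
    have IIb : IntervalIntegrable (fun u => ∫ v in a..y₂,
        dprh a b F₀ f₀ θ₁ θ₂ θ₁' θ₂' u v) volume y₂ y₁ :=
      (hHA.1.const_mul (θ₁ * F₀ y₂ ^ θ₂')).congr_ae heqb.symm
    have IIa : IntervalIntegrable (fun u => ∫ v in a..y₂,
        dprh a b F₀ f₀ θ₁ θ₂ θ₁' θ₂' u v) volume a y₂ :=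
      (intervalIntegrable_iff_integrableOn_Ioc_of_le h1.le).2 hL.1
    have Eb : ∫ u in y₂..y₁, (∫ v in a..y₂, dprh a b F₀ f₀ θ₁ θ₂ θ₁' θ₂' u v)
        = (θ₁ * F₀ y₂ ^ θ₂') * (F₀ y₁ ^ (θ₁ + θ₂ - θ₂') / (θ₁ + θ₂ - θ₂')
            - F₀ y₂ ^ (θ₁ + θ₂ - θ₂') / (θ₁ + θ₂ - θ₂')) := by
      calc ∫ u in y₂..y₁, (∫ v in a..y₂, dprh a b F₀ f₀ θ₁ θ₂ θ₁' θ₂' u v)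
          = ∫ u in y₂..y₁, H u := intervalIntegral.integral_congr_ae haeH
        _ = (θ₁ * F₀ y₂ ^ θ₂') * ∫ u in y₂..y₁, f₀ u * F₀ u ^ (θ₁ + θ₂ - θ₂' - 1) := by
            rw [hH]; exact intervalIntegral.integral_const_mul _ _
        _ = _ := by rw [hHA.2]
    rw [← intervalIntegral.integral_add_adjacent_intervals IIa IIb, hL.2, Eb]
    rw [sub_self, mul_zero, add_zero]
    field_simp
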